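/- The convolution-dilation slicer with unit-norm kernels is a linear functional of Euclidean norm at most 1 (key step in the proof of Proposition 2 for CSW-d): suppose each kernel K^{(1)} ∈ ℝ^{c×2×2}, K^{(h)} ∈ ℝ^{1×2×2} (2 ≤ h ≤ N−1), K^{(N)} ∈ ℝ^{1×a×a} satisfies ‖K^{(h)}‖₂ = 1. Then there exists Θ ∈ ℝ^{c×d×d} with ‖Θ‖₂ ≤ 1 such that CS-d(X|K^{(1)},…,K^{(N)}) = Σ_{h=1}^{c} Σ_{i=1}^{d} Σ_{j=1}^{d} Θ_{h,i,j}·X_{h,i,j} for all X ∈ ℝ^{c×d×d}. In particular, X ↦ CS-d(X|K^{(1)},…,K^{(N)}) is linear and 1-Lipschitz. -/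

import Mathlib

open MeasureTheory ENNReal

noncomputable section

/-- Stride-1, dilation-`m` convolution of a `c' × (2m) × (2m)` tensor with a `c' × 2 × 2` kernel
(one output channel): `Y i j = ∑ h, ∑ i', ∑ j', X h (i + m·i') (j + m·j') * K h i' j'`. -/
def convDil {c' : ℕ} (m : ℕ) (X : Fin c' → Fin (2 * m) → Fin (2 * m) → ℝ)
    (K : Fin c' → Fin 2 → Fin 2 → ℝ) (i j : Fin m) : ℝ :=
  ∑ h : Fin c', ∑ i' : Fin 2, ∑ j' : Fin 2,
    X h ⟨i.1 + m * i'.1, by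
          have h1 := i.isLt
          have h2 : m * i'.1 ≤ m * 1 := Nat.mul_le_mul (le_refl m) (Nat.lt_succ_iff.mp i'.isLt)
          omega⟩
        ⟨j.1 + m * j'.1, by
          have h1 := j.isLt
          have h2 : m * j'.1 ≤ m * 1 := Nat.mul_le_mul (le_refl m) (Nat.lt_succ_iff.mp j'.isLt)
          omega⟩ * K h i' j'

-- index split lemma
lemma sum_two_split (m : ℕ) (f : Fin (2 * m) → ℝ) :
    ∑ i : Fin m, ∑ i' : Fin 2,
      f ⟨i.1 + m * i'.1, by
          have h1 := i.isLt
          have h2 : m * i'.1 ≤ m * 1 := Nat.mul_le_mul (le_refl m) (Nat.lt_succ_iff.mp i'.isLt)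
          omega⟩
      = ∑ p : Fin (2 * m), f p := by
  have h1 : ∑ x : Fin m × Fin 2,
      f ⟨x.1.1 + m * x.2.1, by
          have h1 := x.1.isLt
          have h2 : m * x.2.1 ≤ m * 1 := Nat.mul_le_mul (le_refl m) (Nat.lt_succ_iff.mp x.2.isLt)
          omega⟩ = ∑ p : Fin (2 * m), f p := by
    refine Fintype.sum_equiv ((Equiv.prodComm (Fin m) (Fin 2)).trans finProdFinEquiv) _ _
      (fun x => rfl)
  rw [← h1, Fintype.sum_prod_type]

-- Cauchy-Schwarz-type bound for a single conv step
lemma convDil_sq_bound {c' : ℕ} (m : ℕ) (X : Fin c' → Fin (2 * m) → Fin (2 * m) → ℝ)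
    (K : Fin c' → Fin 2 → Fin 2 → ℝ) :
    ∑ i : Fin m, ∑ j : Fin m, (convDil m X K i j) ^ 2 ≤
      (∑ h : Fin c', ∑ i' : Fin 2, ∑ j' : Fin 2, K h i' j' ^ 2) *
      (∑ h : Fin c', ∑ p : Fin (2 * m), ∑ q : Fin (2 * m), X h p q ^ 2) := by
  have key : ∀ i j : Fin m, (convDil m X K i j) ^ 2 ≤
      (∑ h : Fin c', ∑ i' : Fin 2, ∑ j' : Fin 2, K h i' j' ^ 2) *
      (∑ h : Fin c', ∑ i' : Fin 2, ∑ j' : Fin 2,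
        X h ⟨i.1 + m * i'.1, by
          have h1 := i.isLt
          have h2 : m * i'.1 ≤ m * 1 := Nat.mul_le_mul (le_refl m) (Nat.lt_succ_iff.mp i'.isLt)
          omega⟩
        ⟨j.1 + m * j'.1, by
          have h1 := j.isLt
          have h2 : m * j'.1 ≤ m * 1 := Nat.mul_le_mul (le_refl m) (Nat.lt_succ_iff.mp j'.isLt)
          omega⟩ ^ 2) := by
    intro i j
    have hCS := Finset.sum_mul_sq_le_sq_mul_sq Finset.univ
      (fun x : Fin c' × Fin 2 × Fin 2 => K x.1 x.2.1 x.2.2)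
      (fun x : Fin c' × Fin 2 × Fin 2 =>
        X x.1 ⟨i.1 + m * x.2.1.1, by
          have h1 := i.isLt
          have h2 : m * x.2.1.1 ≤ m * 1 :=
            Nat.mul_le_mul (le_refl m) (Nat.lt_succ_iff.mp x.2.1.isLt)
          omega⟩
        ⟨j.1 + m * x.2.2.1, by
          have h1 := j.isLt
          have h2 : m * x.2.2.1 ≤ m * 1 :=
            Nat.mul_le_mul (le_refl m) (Nat.lt_succ_iff.mp x.2.2.isLt)
          omega⟩)
    simp only [Fintype.sum_prod_type] at hCS
    calc (convDil m X K i j) ^ 2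
        = (∑ h : Fin c', ∑ i' : Fin 2, ∑ j' : Fin 2,
            K h i' j' * X h ⟨i.1 + m * i'.1, by
              have h1 := i.isLt
              have h2 : m * i'.1 ≤ m * 1 :=
                Nat.mul_le_mul (le_refl m) (Nat.lt_succ_iff.mp i'.isLt)
              omega⟩
            ⟨j.1 + m * j'.1, by
              have h1 := j.isLt
              have h2 : m * j'.1 ≤ m * 1 :=
                Nat.mul_le_mul (le_refl m) (Nat.lt_succ_iff.mp j'.isLt)
              omega⟩) ^ 2 := by
          rw [convDil]; congr 1
          exact Finset.sum_congr rfl fun h _ => Finset.sum_congr rfl fun i' _ =>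
            Finset.sum_congr rfl fun j' _ => mul_comm _ _
      _ ≤ _ := hCS
  calc ∑ i : Fin m, ∑ j : Fin m, (convDil m X K i j) ^ 2
      ≤ ∑ i : Fin m, ∑ j : Fin m,
        (∑ h : Fin c', ∑ i' : Fin 2, ∑ j' : Fin 2, K h i' j' ^ 2) *
        (∑ h : Fin c', ∑ i' : Fin 2, ∑ j' : Fin 2,
          X h ⟨i.1 + m * i'.1, by
            have h1 := i.isLt
            have h2 : m * i'.1 ≤ m * 1 := Nat.mul_le_mul (le_refl m) (Nat.lt_succ_iff.mp i'.isLt)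
            omega⟩
          ⟨j.1 + m * j'.1, by
            have h1 := j.isLt
            have h2 : m * j'.1 ≤ m * 1 := Nat.mul_le_mul (le_refl m) (Nat.lt_succ_iff.mp j'.isLt)
            omega⟩ ^ 2) :=
        Finset.sum_le_sum fun i _ => Finset.sum_le_sum fun j _ => key i j
    _ = (∑ h : Fin c', ∑ i' : Fin 2, ∑ j' : Fin 2, K h i' j' ^ 2) *
        (∑ h : Fin c', ∑ p : Fin (2 * m), ∑ q : Fin (2 * m), X h p q ^ 2) := by
        simp only [← Finset.mul_sum]
        congr 1
        -- rearrange the quintuple sum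
        calc ∑ i : Fin m, ∑ j : Fin m, ∑ h : Fin c', ∑ i' : Fin 2, ∑ j' : Fin 2,
              X h ⟨i.1 + m * i'.1, by
                have h1 := i.isLt
                have h2 : m * i'.1 ≤ m * 1 :=
                  Nat.mul_le_mul (le_refl m) (Nat.lt_succ_iff.mp i'.isLt)
                omega⟩
              ⟨j.1 + m * j'.1, by
                have h1 := j.isLt
                have h2 : m * j'.1 ≤ m * 1 :=
                  Nat.mul_le_mul (le_refl m) (Nat.lt_succ_iff.mp j'.isLt)
                omega⟩ ^ 2
            = ∑ h : Fin c', ∑ i : Fin m, ∑ i' : Fin 2, ∑ j : Fin m, ∑ j' : Fin 2,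
              X h ⟨i.1 + m * i'.1, by
                have h1 := i.isLt
                have h2 : m * i'.1 ≤ m * 1 :=
                  Nat.mul_le_mul (le_refl m) (Nat.lt_succ_iff.mp i'.isLt)
                omega⟩
              ⟨j.1 + m * j'.1, by
                have h1 := j.isLt
                have h2 : m * j'.1 ≤ m * 1 :=
                  Nat.mul_le_mul (le_refl m) (Nat.lt_succ_iff.mp j'.isLt)
                omega⟩ ^ 2 := by
              refine Eq.trans (Finset.sum_congr rfl fun i _ => Finset.sum_comm) ?_
              refine Eq.trans Finset.sum_comm ?_
              exact Finset.sum_congr rfl fun h _ => Finset.sum_congr rfl fun i _ =>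
                Finset.sum_comm
          _ = ∑ h : Fin c', ∑ p : Fin (2 * m), ∑ q : Fin (2 * m), X h p q ^ 2 := by
              refine Finset.sum_congr rfl fun h _ => ?_
              rw [← sum_two_split m (fun p => ∑ q : Fin (2 * m), X h p q ^ 2)]
              refine Finset.sum_congr rfl fun i _ => Finset.sum_congr rfl fun i' _ => ?_
              exact sum_two_split m (fun q => X h ⟨i.1 + m * i'.1, by
                have h1 := i.isLt
                have h2 : m * i'.1 ≤ m * 1 :=
                  Nat.mul_le_mul (le_refl m) (Nat.lt_succ_iff.mp i'.isLt)
                omega⟩ q ^ 2)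

/-- Iterated dilated convolutions (stride 1, dilation equal to half the current spatial size)
with single-channel `1 × 2 × 2` kernels, going from spatial size `2^k * a` down to size `a`;
`Ks 0` is applied first. -/
def midConvDil (a : ℕ) : (k : ℕ) → (Fin k → Fin 1 → Fin 2 → Fin 2 → ℝ) →
    (Fin (2 ^ k * a) → Fin (2 ^ k * a) → ℝ) → Fin a → Fin a → ℝ
  | 0, _, X, i, j => X (Fin.cast (by ring) i) (Fin.cast (by ring) j)
  | k + 1, Ks, X, i, j =>
      midConvDil a k (fun t => Ks t.succ)
        (convDil (2 ^ k * a)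
          (fun _ r s => X (Fin.cast (by ring) r) (Fin.cast (by ring) s))
          (Ks 0)) i j

lemma sum_cast {n n' : ℕ} (h : n = n') (f : Fin n' → ℝ) :
    ∑ r : Fin n, f (Fin.cast h r) = ∑ p : Fin n', f p :=
  Fintype.sum_equiv (finCongr h) _ _ (fun _ => rfl)

lemma midConvDil_sq_bound (a : ℕ) : ∀ (k : ℕ) (Ks : Fin k → Fin 1 → Fin 2 → Fin 2 → ℝ)
    (X : Fin (2 ^ k * a) → Fin (2 ^ k * a) → ℝ),
    (∀ t, ∑ h : Fin 1, ∑ i : Fin 2, ∑ j : Fin 2, Ks t h i j ^ 2 ≤ 1) →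
    ∑ i : Fin a, ∑ j : Fin a, (midConvDil a k Ks X i j) ^ 2 ≤
      ∑ p : Fin (2 ^ k * a), ∑ q : Fin (2 ^ k * a), X p q ^ 2
  | 0, Ks, X, _ => by
      simp only [midConvDil]
      rw [← sum_cast (show a = 2 ^ 0 * a by ring) (fun p => ∑ q : Fin (2 ^ 0 * a), X p q ^ 2)]
      exact le_of_eq (Finset.sum_congr rfl fun i _ =>
        sum_cast (show a = 2 ^ 0 * a by ring) (fun q => X (Fin.cast (by ring) i) q ^ 2))
  | k + 1, Ks, X, hKs => by
      simp only [midConvDil]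
      refine le_trans (midConvDil_sq_bound a k (fun t => Ks t.succ) _
        (fun t => hKs t.succ)) ?_
      refine le_trans (convDil_sq_bound (2 ^ k * a) _ (Ks 0)) ?_
      have h1 : (∑ h : Fin 1, ∑ i : Fin 2, ∑ j : Fin 2, Ks 0 h i j ^ 2) ≤ 1 := hKs 0
      have h2 : (∑ h : Fin 1, ∑ p : Fin (2 * (2 ^ k * a)), ∑ q : Fin (2 * (2 ^ k * a)),
          (X (Fin.cast (by ring) p) (Fin.cast (by ring) q)) ^ 2)
          = ∑ p : Fin (2 ^ (k + 1) * a), ∑ q : Fin (2 ^ (k + 1) * a), X p q ^ 2 := by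
        rw [Fin.sum_univ_one]
        rw [← sum_cast (show 2 * (2 ^ k * a) = 2 ^ (k + 1) * a by ring)
          (fun p => ∑ q : Fin (2 ^ (k + 1) * a), X p q ^ 2)]
        refine Finset.sum_congr rfl fun p _ => ?_
        exact sum_cast (show 2 * (2 ^ k * a) = 2 ^ (k + 1) * a by ring)
          (fun q => X (Fin.cast (by ring) p) q ^ 2)
      rw [h2]
      have h3 : (0 : ℝ) ≤ ∑ p : Fin (2 ^ (k + 1) * a), ∑ q : Fin (2 ^ (k + 1) * a), X p q ^ 2 :=
        Finset.sum_nonneg fun _ _ => Finset.sum_nonneg fun _ _ => sq_nonneg _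
      nlinarith [h1, h3]

lemma convDil_lin {c' : ℕ} (m : ℕ) (α β : ℝ)
    (X X' : Fin c' → Fin (2 * m) → Fin (2 * m) → ℝ)
    (K : Fin c' → Fin 2 → Fin 2 → ℝ) (i j : Fin m) :
    convDil m (fun h r s => α * X h r s + β * X' h r s) K i j =
      α * convDil m X K i j + β * convDil m X' K i j := by
  simp only [convDil, Finset.mul_sum, ← Finset.sum_add_distrib]
  exact Finset.sum_congr rfl fun h _ => Finset.sum_congr rfl fun i' _ =>
    Finset.sum_congr rfl fun j' _ => by ring

lemma midConvDil_lin (a : ℕ) : ∀ (k : ℕ) (Ks : Fin k → Fin 1 → Fin 2 → Fin 2 → ℝ)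
    (α β : ℝ) (X X' : Fin (2 ^ k * a) → Fin (2 ^ k * a) → ℝ) (i j : Fin a),
    midConvDil a k Ks (fun r s => α * X r s + β * X' r s) i j =
      α * midConvDil a k Ks X i j + β * midConvDil a k Ks X' i j
  | 0, Ks, α, β, X, X', i, j => by simp [midConvDil]
  | k + 1, Ks, α, β, X, X', i, j => by
      simp only [midConvDil]
      have hfun : (convDil (2 ^ k * a)
          (fun _ r s => (fun r s => α * X r s + β * X' r s)
            (Fin.cast (by ring) r) (Fin.cast (by ring) s)) (Ks 0)) =
          fun r s => α * convDil (2 ^ k * a)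
            (fun _ r s => X (Fin.cast (by ring) r) (Fin.cast (by ring) s)) (Ks 0) r s +
          β * convDil (2 ^ k * a)
            (fun _ r s => X' (Fin.cast (by ring) r) (Fin.cast (by ring) s)) (Ks 0) r s := by
        funext r s
        exact convDil_lin (2 ^ k * a) α β _ _ (Ks 0) r s
      rw [hfun]
      exact midConvDil_lin a k (fun t => Ks t.succ) α β _ _ i j

/-- The space of `c × d × d` images, with the Euclidean (ℓ2) norm. -/
abbrev TensorSpace (c d : ℕ) := EuclideanSpace ℝ (Fin c × Fin d × Fin d)

/-- The convolution-dilation slicer `CS-d(·|K^(1),…,K^(N))` with `N = M + 2` kernels, on images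
of size `c × d × d` where `d = 2^(M+1) * a`: a dilated convolution (stride 1, dilation `d/2`)
with the `c × 2 × 2` kernel `K1`, then `M` dilated convolutions with the `1 × 2 × 2` kernels
`Ks` (at step `h` the dilation is half the current spatial size), then the inner product with
the `1 × a × a` kernel `KN`. -/
def CSd (c a M : ℕ) (K1 : Fin c → Fin 2 → Fin 2 → ℝ)
    (Ks : Fin M → Fin 1 → Fin 2 → Fin 2 → ℝ) (KN : Fin 1 → Fin a → Fin a → ℝ)
    (X : TensorSpace c (2 ^ (M + 1) * a)) : ℝ :=
  ∑ i : Fin a, ∑ j : Fin a,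
    midConvDil a M Ks
      (convDil (2 ^ M * a)
        (fun h r s => X (h, Fin.cast (by ring) r, Fin.cast (by ring) s)) K1) i j * KN 0 i j

lemma CSd_lin (c a M : ℕ) (K1 : Fin c → Fin 2 → Fin 2 → ℝ)
    (Ks : Fin M → Fin 1 → Fin 2 → Fin 2 → ℝ) (KN : Fin 1 → Fin a → Fin a → ℝ)
    (α β : ℝ) (X X' : TensorSpace c (2 ^ (M + 1) * a)) :
    CSd c a M K1 Ks KN (α • X + β • X') =
      α * CSd c a M K1 Ks KN X + β * CSd c a M K1 Ks KN X' := by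
  simp only [CSd]
  have hA : (convDil (2 ^ M * a)
      (fun h r s => (α • X + β • X') (h, Fin.cast (by ring) r, Fin.cast (by ring) s)) K1)
      = fun i j => α * convDil (2 ^ M * a)
          (fun h r s => X (h, Fin.cast (by ring) r, Fin.cast (by ring) s)) K1 i j
        + β * convDil (2 ^ M * a)
          (fun h r s => X' (h, Fin.cast (by ring) r, Fin.cast (by ring) s)) K1 i j := by
    funext i j
    rw [show (fun (h : Fin c) (r s : Fin (2 * (2 ^ M * a))) =>
          (α • X + β • X') (h, Fin.cast (by ring) r, Fin.cast (by ring) s))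
        = (fun h r s => α * X (h, Fin.cast (by ring) r, Fin.cast (by ring) s)
            + β * X' (h, Fin.cast (by ring) r, Fin.cast (by ring) s)) from
      funext fun h => funext fun r => funext fun s => by
        simp [PiLp.add_apply, PiLp.smul_apply, smul_eq_mul]]
    exact convDil_lin _ α β _ _ K1 i j
  rw [hA]
  simp only [midConvDil_lin, Finset.mul_sum, ← Finset.sum_add_distrib]
  exact Finset.sum_congr rfl fun i _ => Finset.sum_congr rfl fun j _ => by ring

lemma CSd_bound (c a M : ℕ) (K1 : Fin c → Fin 2 → Fin 2 → ℝ)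
    (Ks : Fin M → Fin 1 → Fin 2 → Fin 2 → ℝ) (KN : Fin 1 → Fin a → Fin a → ℝ)
    (hK1 : ∑ h : Fin c, ∑ i : Fin 2, ∑ j : Fin 2, K1 h i j ^ 2 ≤ 1)
    (hKs : ∀ t : Fin M, ∑ h : Fin 1, ∑ i : Fin 2, ∑ j : Fin 2, Ks t h i j ^ 2 ≤ 1)
    (hKN : ∑ i : Fin a, ∑ j : Fin a, KN 0 i j ^ 2 ≤ 1)
    (X : TensorSpace c (2 ^ (M + 1) * a)) :
    |CSd c a M K1 Ks KN X| ≤ ‖X‖ := by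
  set B := midConvDil a M Ks
    (convDil (2 ^ M * a)
      (fun h r s => X (h, Fin.cast (by ring) r, Fin.cast (by ring) s)) K1) with hB
  have hCS : (CSd c a M K1 Ks KN X) ^ 2 ≤
      (∑ i : Fin a, ∑ j : Fin a, B i j ^ 2) * (∑ i : Fin a, ∑ j : Fin a, KN 0 i j ^ 2) := by
    have h := Finset.sum_mul_sq_le_sq_mul_sq Finset.univ
      (fun x : Fin a × Fin a => B x.1 x.2) (fun x : Fin a × Fin a => KN 0 x.1 x.2)
    simp only [Fintype.sum_prod_type] at h
    exact h
  have hXsq : ∑ i : Fin a, ∑ j : Fin a, B i j ^ 2 ≤ ‖X‖ ^ 2 := by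
    refine le_trans (midConvDil_sq_bound a M Ks _ hKs) ?_
    refine le_trans (convDil_sq_bound (2 ^ M * a) _ K1) ?_
    have hX2 : (∑ h : Fin c, ∑ p : Fin (2 * (2 ^ M * a)), ∑ q : Fin (2 * (2 ^ M * a)),
        X (h, Fin.cast (by ring) p, Fin.cast (by ring) q) ^ 2) = ‖X‖ ^ 2 := by
      rw [EuclideanSpace.norm_eq, Real.sq_sqrt (Finset.sum_nonneg fun _ _ => sq_nonneg _)]
      rw [Fintype.sum_prod_type]
      refine Finset.sum_congr rfl fun h _ => ?_
      rw [Fintype.sum_prod_type]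
      rw [← sum_cast (show 2 * (2 ^ M * a) = 2 ^ (M + 1) * a by ring)
        (fun p => ∑ q : Fin (2 ^ (M + 1) * a), ‖X (h, p, q)‖ ^ 2)]
      refine Finset.sum_congr rfl fun p _ => ?_
      rw [← sum_cast (show 2 * (2 ^ M * a) = 2 ^ (M + 1) * a by ring)
        (fun q => ‖X (h, Fin.cast (by ring : 2 * (2 ^ M * a) = 2 ^ (M + 1) * a) p, q)‖ ^ 2)]
      exact Finset.sum_congr rfl fun q _ => by rw [Real.norm_eq_abs, sq_abs]
    rw [hX2]
    nlinarith [hK1, sq_nonneg ‖X‖]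
  have hBnn : (0:ℝ) ≤ ∑ i : Fin a, ∑ j : Fin a, B i j ^ 2 :=
    Finset.sum_nonneg fun _ _ => Finset.sum_nonneg fun _ _ => sq_nonneg _
  have hfin : (CSd c a M K1 Ks KN X) ^ 2 ≤ ‖X‖ ^ 2 := by nlinarith [hCS, hXsq, hBnn, hKN]
  calc |CSd c a M K1 Ks KN X| = Real.sqrt ((CSd c a M K1 Ks KN X) ^ 2) :=
        (Real.sqrt_sq_eq_abs _).symm
    _ ≤ Real.sqrt (‖X‖ ^ 2) := Real.sqrt_le_sqrt hfin
    _ = ‖X‖ := Real.sqrt_sq (norm_nonneg X)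

/-- The convolution-dilation slicer with unit-norm kernels is a linear functional of Euclidean
norm at most 1: there is `Θ ∈ ℝ^{c×d×d}` with `‖Θ‖₂ ≤ 1` such that
`CS-d(X|K^(1),…,K^(N)) = ∑_{h,i,j} Θ_{h,i,j} X_{h,i,j}`; in particular the slicer is linear and
1-Lipschitz. Here `d = 2^(M+1)·a`, i.e. `N = M + 2 ≥ 2`. -/
theorem CSd_linear_functional (c a M : ℕ) (hc : 1 ≤ c) (ha : 1 ≤ a)
    (K1 : Fin c → Fin 2 → Fin 2 → ℝ) (Ks : Fin M → Fin 1 → Fin 2 → Fin 2 → ℝ)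
    (KN : Fin 1 → Fin a → Fin a → ℝ)
    (hK1 : Real.sqrt (∑ h : Fin c, ∑ i : Fin 2, ∑ j : Fin 2, K1 h i j ^ 2) = 1)
    (hKs : ∀ t : Fin M,
      Real.sqrt (∑ h : Fin 1, ∑ i : Fin 2, ∑ j : Fin 2, Ks t h i j ^ 2) = 1)
    (hKN : Real.sqrt (∑ h : Fin 1, ∑ i : Fin a, ∑ j : Fin a, KN h i j ^ 2) = 1) :
    ∃ Θ : TensorSpace c (2 ^ (M + 1) * a), ‖Θ‖ ≤ 1 ∧
      (∀ X : TensorSpace c (2 ^ (M + 1) * a),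
        CSd c a M K1 Ks KN X =
          ∑ h : Fin c, ∑ i : Fin (2 ^ (M + 1) * a), ∑ j : Fin (2 ^ (M + 1) * a),
            Θ (h, i, j) * X (h, i, j)) ∧
      IsLinearMap ℝ (CSd c a M K1 Ks KN) ∧ LipschitzWith 1 (CSd c a M K1 Ks KN) := by
  have sqrt_one : ∀ {x : ℝ}, 0 ≤ x → Real.sqrt x = 1 → x = 1 := by
    intro x hx h
    rw [← Real.sq_sqrt hx, h]; norm_num
  have nn3 : ∀ {ι κ γ : Type} [Fintype ι] [Fintype κ] [Fintype γ]
      (f : ι → κ → γ → ℝ), (0:ℝ) ≤ ∑ h, ∑ i, ∑ j, f h i j ^ 2 := by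
    intro ι κ γ _ _ _ f
    exact Finset.sum_nonneg fun _ _ => Finset.sum_nonneg fun _ _ =>
      Finset.sum_nonneg fun _ _ => sq_nonneg _
  have hK1' : ∑ h : Fin c, ∑ i : Fin 2, ∑ j : Fin 2, K1 h i j ^ 2 ≤ 1 :=
    le_of_eq (sqrt_one (nn3 K1) hK1)
  have hKs' : ∀ t, ∑ h : Fin 1, ∑ i : Fin 2, ∑ j : Fin 2, Ks t h i j ^ 2 ≤ 1 :=
    fun t => le_of_eq (sqrt_one (nn3 (Ks t)) (hKs t))
  have hKN' : ∑ i : Fin a, ∑ j : Fin a, KN 0 i j ^ 2 ≤ 1 := by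
    have := sqrt_one (nn3 KN) hKN
    rw [Fin.sum_univ_one] at this
    exact le_of_eq this
  have hlin : IsLinearMap ℝ (CSd c a M K1 Ks KN) := by
    constructor
    · intro X Y
      have h := CSd_lin c a M K1 Ks KN 1 1 X Y
      simpa using h
    · intro r X
      have h := CSd_lin c a M K1 Ks KN r 0 X X
      simpa using h
  set L := IsLinearMap.mk' _ hlin with hL
  set Θ : TensorSpace c (2 ^ (M + 1) * a) :=
    WithLp.toLp 2 (fun p => CSd c a M K1 Ks KN (EuclideanSpace.single p (1:ℝ))) with hΘ
  have hrep : ∀ X : TensorSpace c (2 ^ (M + 1) * a),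
      CSd c a M K1 Ks KN X =
        ∑ h : Fin c, ∑ i : Fin (2 ^ (M + 1) * a), ∑ j : Fin (2 ^ (M + 1) * a),
          Θ (h, i, j) * X (h, i, j) := by
    intro X
    have hdecomp : X = ∑ p : Fin c × Fin (2 ^ (M + 1) * a) × Fin (2 ^ (M + 1) * a),
        X p • EuclideanSpace.single p (1:ℝ) := by
      refine ((EuclideanSpace.basisFun _ ℝ).sum_repr X).symm.trans ?_
      simp [EuclideanSpace.basisFun_repr, EuclideanSpace.basisFun_apply]
    calc CSd c a M K1 Ks KN X
        = L (∑ p : Fin c × Fin (2 ^ (M + 1) * a) × Fin (2 ^ (M + 1) * a),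
            X p • EuclideanSpace.single p (1:ℝ)) := by rw [← hdecomp]; rfl
      _ = ∑ p : Fin c × Fin (2 ^ (M + 1) * a) × Fin (2 ^ (M + 1) * a),
            X p * Θ p := by
          rw [map_sum]
          exact Finset.sum_congr rfl fun p _ => by
            rw [_root_.map_smul]; rfl
      _ = ∑ h : Fin c, ∑ i : Fin (2 ^ (M + 1) * a), ∑ j : Fin (2 ^ (M + 1) * a),
            Θ (h, i, j) * X (h, i, j) := by
          rw [Fintype.sum_prod_type]
          refine Finset.sum_congr rfl fun h _ => ?_
          rw [Fintype.sum_prod_type]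
          exact Finset.sum_congr rfl fun i _ => Finset.sum_congr rfl fun j _ => mul_comm _ _
  have hbound : ∀ X, |CSd c a M K1 Ks KN X| ≤ ‖X‖ :=
    fun X => CSd_bound c a M K1 Ks KN hK1' hKs' hKN' X
  have hΘnorm : ‖Θ‖ ≤ 1 := by
    have hsq : ‖Θ‖ ^ 2 = CSd c a M K1 Ks KN Θ := by
      rw [hrep Θ, EuclideanSpace.norm_eq,
        Real.sq_sqrt (Finset.sum_nonneg fun _ _ => sq_nonneg _)]
      rw [Fintype.sum_prod_type]
      refine Finset.sum_congr rfl fun h _ => ?_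
      rw [Fintype.sum_prod_type]
      refine Finset.sum_congr rfl fun i _ => Finset.sum_congr rfl fun j _ => ?_
      rw [Real.norm_eq_abs, sq_abs, sq]
    have h1 : CSd c a M K1 Ks KN Θ ≤ ‖Θ‖ := le_trans (le_abs_self _) (hbound Θ)
    nlinarith [norm_nonneg Θ, hsq, h1]
  refine ⟨Θ, hΘnorm, hrep, hlin, ?_⟩
  refine LipschitzWith.of_dist_le_mul fun X Y => ?_
  have hsub : CSd c a M K1 Ks KN X - CSd c a M K1 Ks KN Y =
      CSd c a M K1 Ks KN (X - Y) := by
    have h := CSd_lin c a M K1 Ks KN 1 (-1) X Y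
    rw [one_smul, neg_one_smul, one_mul, neg_one_mul, ← sub_eq_add_neg] at h
    rw [h, sub_eq_add_neg]
  rw [Real.dist_eq, hsub, NNReal.coe_one, one_mul, dist_eq_norm]
  exact hbound (X - Y)

end
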